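/- Let k, d ≥ 2, let Δ = k + 1, and let H be built by the 2-step method from the connected (d,Δ)-bipartite graph H0 using a [Δ,k]-transversal design T. Let Q and Q' be distinct blocks of H0 that have exactly one common neighbour p_1 in H0, and suppose that there is a path in H0 from Q to Q' of length at most μ that avoids p_1. Then for any block B_{Q,V} ∈ B_Q of H and any block B_{Q',V'} ∈ B_{Q'} of H there are Δ = k + 1 pairwise internally-disjoint paths in H from B_{Q,V} to B_{Q',V'}, of which k have length at most 6 and the remaining path has length at most μ. -/

import Mathlib

/-- The bipartite graph on `ν ⊕ β` (nodes on the left, blocks on the right)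
determined by the adjacency relation `adj`. -/
def bipGraph {ν β : Type} (adj : ν → β → Prop) : SimpleGraph (ν ⊕ β) :=
  SimpleGraph.fromRel fun u v => ∃ x b, u = Sum.inl x ∧ v = Sum.inr b ∧ adj x b

/-- A `[Δ,k]`-transversal design: the nodes form a set of size `Δ * k` partitioned
into `Δ` groups (the fibres of `group`), each of size `k`; there are `k ^ 2` blocks;
every block is adjacent to exactly one node of each group; and every pair of nodes
lying in distinct groups is adjacent to exactly one common block (the block
*generated* by the pair). -/
structure IsTransversalDesign {ν β : Type} (Δ k : ℕ)
    (group : ν → Fin Δ) (adj : ν → β → Prop) : Prop where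
  two_le_k : 2 ≤ k
  two_le_Δ : 2 ≤ Δ
  groupCard : ∀ i : Fin Δ, Nat.card {x : ν // group x = i} = k
  blockCard : Nat.card β = k ^ 2
  blockMeets : ∀ (b : β) (i : Fin Δ), ∃! x : ν, group x = i ∧ adj x b
  pairGen : ∀ x y : ν, group x ≠ group y → ∃! b : β, adj x b ∧ adj y b

/-- A family of walks (with sources `s i` and destinations `t i`) is pairwise
internally-disjoint if every vertex which is a source or destination of some member
of the family appears on members of the family only as their source or destination,
and every vertex which is not a source or destination of any member of the family
lies on at most one member of the family. -/
def PairwiseInternallyDisjoint {V ι : Type} {G : SimpleGraph V} {s t : ι → V}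
    (p : (i : ι) → G.Walk (s i) (t i)) : Prop :=
  (∀ i j : ι, ∀ v : V, v ∈ (p i).support → (v = s j ∨ v = t j) → v = s i ∨ v = t i) ∧
  (∀ i j : ι, ∀ v : V, (∀ l : ι, v ≠ s l ∧ v ≠ t l) →
    v ∈ (p i).support → v ∈ (p j).support → i = j)

/-- A family of walks is pairwise edge-disjoint if every edge lies on at most one
member of the family. -/
def PairwiseEdgeDisjoint {V ι : Type} {G : SimpleGraph V} {s t : ι → V}
    (p : (i : ι) → G.Walk (s i) (t i)) : Prop :=
  ∀ i j : ι, ∀ e : Sym2 V, e ∈ (p i).edges → e ∈ (p j).edges → i = j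

/-- A `(d,Δ)`-bipartite graph: every node has degree `d` and every block has
degree (rank) `Δ`. -/
def IsBipartiteDegRank {ν β : Type} (d Δ : ℕ) (adj : ν → β → Prop) : Prop :=
  (∀ x : ν, Nat.card {b : β // adj x b} = d) ∧
  (∀ b : β, Nat.card {x : ν // adj x b} = Δ)

/-- The bipartite graph determined by `adj` has line-diameter `l`: the maximum,
over pairs of distinct blocks, of the distance between the two blocks is `l`. -/
def HasLineDiam {ν β : Type} (adj : ν → β → Prop) (l : ℕ) : Prop :=
  (∀ b b' : β, b ≠ b' → (bipGraph adj).dist (Sum.inr b) (Sum.inr b') ≤ l) ∧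
  (∃ b b' : β, b ≠ b' ∧ (bipGraph adj).dist (Sum.inr b) (Sum.inr b') = l)

/-- `adjH` describes the bipartite graph `H` built by the 2-step method from the
bipartite graph `H0` (given by `adj0`) and the `[Δ,k]`-transversal design `T`
(given by `groupT`, `adjT`): the nodes of `H` are the pairs `(p, j)` for `p` a node
of `H0` and `j : Fin k` (so the group `G_p` is `{p} × Fin k`), the blocks of `H`
are the pairs `(Q, b)` for `Q` a block of `H0` and `b` a block of `T` (so the set
`B_Q` is `{Q} × βT`, and such sets are automatically pairwise disjoint, as are the
edge sets of the copies `T_Q`), a node `(p, j)` is adjacent in `H` to a block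
`(Q, b)` only if `p` is adjacent to `Q` in `H0`, and for every block `Q` of `H0`
the nodes of the groups `G_p`, for `p` a neighbour of `Q` in `H0`, together with
the blocks of `B_Q` form a copy `T_Q` of `T` whose `Δ` groups are these groups. -/
structure TwoStep {ν0 β0 νT βT : Type} (Δ k : ℕ)
    (adj0 : ν0 → β0 → Prop) (groupT : νT → Fin Δ) (adjT : νT → βT → Prop)
    (adjH : ν0 × Fin k → β0 × βT → Prop) : Prop where
  td : IsTransversalDesign Δ k groupT adjT
  supp : ∀ (x : ν0 × Fin k) (Q : β0) (b : βT), adjH x (Q, b) → adj0 x.1 Q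
  copy : ∀ Q : β0, ∃ (enum : Fin Δ → ν0) (f : νT ≃ {x : ν0 × Fin k // adj0 x.1 Q})
      (g : βT ≃ βT),
    Function.Injective enum ∧ (∀ i : Fin Δ, adj0 (enum i) Q) ∧
    (∀ q : ν0, adj0 q Q → ∃ i : Fin Δ, enum i = q) ∧
    (∀ x : νT, ((f x : ν0 × Fin k).1 = enum (groupT x))) ∧
    (∀ (x : νT) (b : βT), adjT x b ↔ adjH (f x : ν0 × Fin k) (Q, g b))

/-- Let `k, d ≥ 2`, let `Δ = k + 1`, and let `H` (given by `adjH`) be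
built by the 2-step method from the connected `(d, k+1)`-bipartite graph `H0` using
a `[k+1,k]`-transversal design `T`.  Suppose `Q` and `Q'` are distinct blocks of
`H0` with exactly one common neighbour `p1`, and that there is a path in `H0` from
`Q` to `Q'` of length at most `μ` avoiding `p1`.  Then for any blocks
`(Q, V) ∈ B_Q` and `(Q', V') ∈ B_{Q'}` of `H` there are `k + 1` pairwise
internally-disjoint paths in `H` from `(Q, V)` to `(Q', V')`, of which `k` have
length at most `6` and the remaining one has length at most `μ`. -/
lemma bip_adj {ν β : Type} {adj : ν → β → Prop} (x : ν) (b : β) :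
    (bipGraph adj).Adj (Sum.inl x) (Sum.inr b) ↔ adj x b := by
  simp [bipGraph, SimpleGraph.fromRel_adj]

lemma bip_adj_inl {ν β : Type} {adj : ν → β → Prop} {x : ν} {v : ν ⊕ β}
    (h : (bipGraph adj).Adj (Sum.inl x) v) : ∃ b, v = Sum.inr b ∧ adj x b := by
  rw [bipGraph, SimpleGraph.fromRel_adj] at h
  obtain ⟨-, h | h⟩ := h
  · obtain ⟨x', b, hx, hv, ha⟩ := h
    exact ⟨b, hv, by cases hx; exact ha⟩
  · obtain ⟨x', b, hx, hv, ha⟩ := h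
    simp at hv

lemma bip_adj_inr {ν β : Type} {adj : ν → β → Prop} {b : β} {v : ν ⊕ β}
    (h : (bipGraph adj).Adj (Sum.inr b) v) : ∃ x, v = Sum.inl x ∧ adj x b := by
  rw [bipGraph, SimpleGraph.fromRel_adj] at h
  obtain ⟨-, h | h⟩ := h
  · obtain ⟨x', b', hx, hv, ha⟩ := h
    simp at hx
  · obtain ⟨x', b', hx, hv, ha⟩ := h
    exact ⟨x', hx, by cases hv; exact ha⟩

/-- second-to-last element of a list, if the list has ≥ 2 elements -/
def penL {α : Type} : List α → Option α
  | [a, _] => some a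
  | _ :: b :: c :: l => penL (b :: c :: l)
  | _ => none

lemma penL_pair {α : Type} (a b : α) : penL [a, b] = some a := rfl
lemma penL_cons₃ {α : Type} (a b c : α) (l : List α) :
    penL (a :: b :: c :: l) = penL (b :: c :: l) := rfl


lemma penL_cons_two {α : Type} {l : List α} (h : 2 ≤ l.length) (a : α) :
    penL (a :: l) = penL l := by
  match l, h with
  | b :: c :: t, _ => rfl

lemma two_le_support_length {ν β : Type} {adj0 : ν → β → Prop} {a : ν} {c : β}
    (W : (bipGraph adj0).Walk (Sum.inl a) (Sum.inr c)) : 2 ≤ W.support.length := by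
  cases W with
  | cons h1 rest => simp [SimpleGraph.Walk.support_cons]

/-- the second-to-last vertex of a walk from a node to a block is a node adjacent
to the final block -/
lemma penShape {ν β : Type} {adj0 : ν → β → Prop} :
    ∀ (n : ℕ) {a : ν} {c : β} (W : (bipGraph adj0).Walk (Sum.inl a) (Sum.inr c)),
      W.length = n →
      ∃ x, penL W.support = some (Sum.inl x) ∧ adj0 x c ∧ Sum.inl x ∈ W.support := by
  intro n
  induction n using Nat.strong_induction_on with
  | _ n ih =>
    intro a c W hlen
    cases W with
    | cons h1 rest =>
      obtain ⟨u2, rfl, hau2⟩ := bip_adj_inl h1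
      cases rest with
      | nil =>
        exact ⟨a, by simp [penL_pair], hau2, by simp⟩
      | cons h2 rest2 =>
        obtain ⟨q2, rfl, hq2⟩ := bip_adj_inr h2
        simp only [SimpleGraph.Walk.length_cons] at hlen
        obtain ⟨x, hx1, hx2, hx3⟩ := ih (n - 2) (by omega) rest2 (by omega)
        refine ⟨x, ?_, hx2, ?_⟩
        · rw [SimpleGraph.Walk.support_cons, SimpleGraph.Walk.support_cons]
          rw [penL_cons_two (by have := two_le_support_length rest2; simp only [List.length_cons]; omega),
              penL_cons_two (two_le_support_length rest2)]
          exact hx1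
        · simp only [SimpleGraph.Walk.support_cons, List.mem_cons]
          right; right; exact hx3

lemma liftWalk {ν0 β0 : Type} {βT : Type} {k : ℕ}
    (adj0 : ν0 → β0 → Prop) (adjH : ν0 × Fin k → β0 × βT → Prop)
    (Q' : β0) (V' : βT) (jsel : ν0 → Fin k) (qm : ν0)
    (hgen : ∀ (u : β0) (a b : ν0), adj0 a u → adj0 b u → a ≠ b →
      ∀ j j' : Fin k, ∃ c : βT, adjH (a, j) (u, c) ∧ adjH (b, j') (u, c))
    (hqm : adjH (qm, jsel qm) (Q', V')) :
    ∀ (n : ℕ) (q : ν0) (rest : (bipGraph adj0).Walk (Sum.inl q) (Sum.inr Q')),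
      rest.length = n → rest.support.Nodup →
      penL rest.support = some (Sum.inl qm) →
      ∃ W : (bipGraph adjH).Walk (Sum.inl (q, jsel q)) (Sum.inr (Q', V')),
        W.support.map (Sum.map Prod.fst Prod.fst) = rest.support ∧
        W.length = rest.length ∧
        ∀ (x : ν0) (j : Fin k), Sum.inl (x, j) ∈ W.support → j = jsel x := by
  intro n
  induction n using Nat.strong_induction_on with
  | _ n ih =>
    intro q rest hlen hnd hpen
    cases rest with
    | cons h1 rest' =>
      obtain ⟨u2, rfl, hqu2⟩ := bip_adj_inl h1
      cases rest' with
      | nil =>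
        -- rest = single edge q - Q', so q = qm
        have hq : q = qm := by
          simp only [SimpleGraph.Walk.support_cons, SimpleGraph.Walk.support_nil,
            penL_pair, Option.some.injEq, Sum.inl.injEq] at hpen
          exact hpen
        subst hq
        refine ⟨SimpleGraph.Walk.cons ((bip_adj _ _).mpr hqm) SimpleGraph.Walk.nil,
          ?_, ?_, ?_⟩
        · simp
        · simp
        · intro x j hx
          simp only [SimpleGraph.Walk.support_cons, SimpleGraph.Walk.support_nil,
            List.mem_cons, List.mem_singleton] at hx
          rcases hx with hx | hx | hx
          · cases hx; rfl
          · exact absurd hx (by simp)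
          · simp at hx
      | cons h2 rest2 =>
        obtain ⟨q2, rfl, hq2u2⟩ := bip_adj_inr h2
        simp only [SimpleGraph.Walk.length_cons] at hlen
        -- q ≠ q2 from nodup
        have hsupp : (SimpleGraph.Walk.cons h1 (SimpleGraph.Walk.cons h2 rest2)).support
            = Sum.inl q :: Sum.inr u2 :: rest2.support := by
          simp [SimpleGraph.Walk.support_cons]
        rw [hsupp] at hnd hpen
        have hq2mem : (Sum.inl q2 : ν0 ⊕ β0) ∈ rest2.support := rest2.start_mem_support
        have hqne : q ≠ q2 := by
          rintro rfl
          exact (List.nodup_cons.mp hnd).1 (List.mem_cons_of_mem _ hq2mem)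
        have hnd2 : rest2.support.Nodup :=
          ((List.nodup_cons.mp (List.nodup_cons.mp hnd).2).2)
        have hL2 : 2 ≤ rest2.support.length := two_le_support_length rest2
        have hpen2 : penL rest2.support = some (Sum.inl qm) := by
          rw [penL_cons_two (l := Sum.inr u2 :: rest2.support)
                (by simp only [List.length_cons]; omega),
              penL_cons_two hL2] at hpen
          exact hpen
        obtain ⟨W2, hW2map, hW2len, hW2nodes⟩ :=
          ih (n - 2) (by omega) q2 rest2 (by omega) hnd2 hpen2
        obtain ⟨c, hc1, hc2⟩ := hgen u2 q q2 hqu2 hq2u2 hqne (jsel q) (jsel q2)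
        refine ⟨SimpleGraph.Walk.cons ((bip_adj _ _).mpr hc1)
          (SimpleGraph.Walk.cons (((bip_adj _ _).mpr hc2)).symm W2), ?_, ?_, ?_⟩
        · simp only [SimpleGraph.Walk.support_cons, List.map_cons, hsupp]
          rw [hW2map]
          rfl
        · simp only [SimpleGraph.Walk.length_cons, hW2len]
        · intro x j hx
          simp only [SimpleGraph.Walk.support_cons, List.mem_cons] at hx
          rcases hx with hx | hx | hx
          · cases hx; rfl
          · exact absurd hx (by simp)
          · exact hW2nodes x j hx

lemma TwoStep.meetH {ν0 β0 νT βT : Type} {Δ k : ℕ}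
    {adj0 : ν0 → β0 → Prop} {groupT : νT → Fin Δ} {adjT : νT → βT → Prop}
    {adjH : ν0 × Fin k → β0 × βT → Prop}
    (h2 : TwoStep Δ k adj0 groupT adjT adjH)
    (Q0 : β0) (b : βT) (q : ν0) (hq : adj0 q Q0) :
    ∃! j : Fin k, adjH (q, j) (Q0, b) := by
  obtain ⟨enum, f, g, henum_inj, henum_adj, henum_surj, hf1, hf2⟩ := h2.copy Q0
  obtain ⟨i, rfl⟩ := henum_surj q hq
  obtain ⟨x, ⟨hgx, hax⟩, hxu⟩ := h2.td.blockMeets (g.symm b) i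
  have hfx1 : ((f x : ν0 × Fin k)).1 = enum i := by rw [hf1 x, hgx]
  refine ⟨(f x : ν0 × Fin k).2, ?_, ?_⟩
  · have h := (hf2 x (g.symm b)).mp hax
    rw [g.apply_symm_apply] at h
    have he : ((f x : ν0 × Fin k)) = (enum i, (f x : ν0 × Fin k).2) :=
      Prod.ext_iff.mpr ⟨hfx1, rfl⟩
    rwa [he] at h
  · intro j' hj'
    have hmem : adj0 ((enum i, j') : ν0 × Fin k).1 Q0 := hq
    set y := f.symm ⟨(enum i, j'), hmem⟩ with hy
    have hfy : (f y : ν0 × Fin k) = (enum i, j') := by rw [hy, f.apply_symm_apply]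
    have hgy : groupT y = i := by
      apply henum_inj
      rw [← hf1 y, hfy]
    have hay : adjT y (g.symm b) := by
      rw [hf2 y (g.symm b), g.apply_symm_apply, hfy]; exact hj'
    have := hxu y ⟨hgy, hay⟩
    rw [← this] at hfx1 ⊢
    have := hfy
    rw [Prod.ext_iff] at this
    exact this.2.symm

/-- any two nodes of distinct groups `G_q`, `G_{q'}` with `q,q'` neighbours of `Q0`
generate a unique block of `B_{Q0}` -/
lemma TwoStep.genH {ν0 β0 νT βT : Type} {Δ k : ℕ}
    {adj0 : ν0 → β0 → Prop} {groupT : νT → Fin Δ} {adjT : νT → βT → Prop}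
    {adjH : ν0 × Fin k → β0 × βT → Prop}
    (h2 : TwoStep Δ k adj0 groupT adjT adjH)
    (Q0 : β0) (q q' : ν0) (hq : adj0 q Q0) (hq' : adj0 q' Q0) (hne : q ≠ q')
    (j j' : Fin k) :
    ∃! b : βT, adjH (q, j) (Q0, b) ∧ adjH (q', j') (Q0, b) := by
  obtain ⟨enum, f, g, henum_inj, henum_adj, henum_surj, hf1, hf2⟩ := h2.copy Q0
  have hmx : adj0 ((q, j) : ν0 × Fin k).1 Q0 := hq
  have hmy : adj0 ((q', j') : ν0 × Fin k).1 Q0 := hq'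
  set x := f.symm ⟨(q, j), hmx⟩ with hxdef
  set y := f.symm ⟨(q', j'), hmy⟩ with hydef
  have hfx : (f x : ν0 × Fin k) = (q, j) := by rw [hxdef, f.apply_symm_apply]
  have hfy : (f y : ν0 × Fin k) = (q', j') := by rw [hydef, f.apply_symm_apply]
  have hgne : groupT x ≠ groupT y := by
    intro hcon
    apply hne
    have h1 := hf1 x; have h2' := hf1 y
    rw [hfx] at h1; rw [hfy] at h2'
    simp only at h1 h2'
    rw [h1, h2', hcon]
  obtain ⟨b0, ⟨hb1, hb2⟩, hbu⟩ := h2.td.pairGen x y hgne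
  refine ⟨g b0, ⟨?_, ?_⟩, ?_⟩
  · have := (hf2 x b0).mp hb1; rwa [hfx] at this
  · have := (hf2 y b0).mp hb2; rwa [hfy] at this
  · intro c ⟨hc1, hc2⟩
    have h1 : adjT x (g.symm c) := by
      rw [hf2 x (g.symm c), g.apply_symm_apply, hfx]; exact hc1
    have h2' : adjT y (g.symm c) := by
      rw [hf2 y (g.symm c), g.apply_symm_apply, hfy]; exact hc2
    have := hbu (g.symm c) ⟨h1, h2'⟩
    rw [← this, g.apply_symm_apply]


lemma embed_aux {ν0 : Type} {k : ℕ} (hk : 2 ≤ k) (P : ν0 → Prop)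
    (hcard : Nat.card {q : ν0 // P q} = k + 1) (a b : ν0) (ha : P a) (hb : P b)
    (hab : a ≠ b) (jA : Fin k) :
    Nonempty ({j : Fin k // j ≠ jA} ↪ {q : ν0 // P q ∧ q ≠ a ∧ q ≠ b}) := by
  classical
  set N : Set ν0 := {q | P q} with hN
  have hNcard : N.ncard = k + 1 := by
    rw [← Nat.card_coe_set_eq]; exact hcard
  have hNfin : N.Finite := Set.finite_of_ncard_ne_zero (by omega)
  have hsub : ({a, b} : Set ν0) ⊆ N := by
    intro x hx; rcases hx with rfl | rfl
    · exact ha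
    · exact hb
  have hdiff : (N \ {a, b}).ncard = k - 1 := by
    rw [Set.ncard_diff hsub (Set.toFinite _), Set.ncard_pair hab, hNcard]
    omega
  have hdfin : (N \ {a, b}).Finite := hNfin.diff
  have he : {q : ν0 // P q ∧ q ≠ a ∧ q ≠ b} ≃ ↥(N \ {a, b}) := by
    apply Equiv.subtypeEquivRight
    intro x
    simp only [hN, Set.mem_diff, Set.mem_setOf_eq, Set.mem_insert_iff,
      Set.mem_singleton_iff, not_or]
  have hcard2 : Nat.card {q : ν0 // P q ∧ q ≠ a ∧ q ≠ b} = k - 1 := by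
    rw [Nat.card_congr he, Nat.card_coe_set_eq, hdiff]
  haveI : Finite {q : ν0 // P q ∧ q ≠ a ∧ q ≠ b} := by
    rw [← Nat.card_coe_set_eq] at hdiff
    have := hdfin.to_subtype
    exact Finite.of_equiv _ he.symm
  haveI : Fintype {q : ν0 // P q ∧ q ≠ a ∧ q ≠ b} := Fintype.ofFinite _
  apply Function.Embedding.nonempty_of_card_le
  have h1 : Fintype.card {j : Fin k // j ≠ jA} = k - 1 := by
    have h := Fintype.card_subtype_compl (fun j : Fin k => j = jA)
    rw [Fintype.card_subtype_eq, Fintype.card_fin] at h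
    exact h
  have h2 : Fintype.card {q : ν0 // P q ∧ q ≠ a ∧ q ≠ b} = k - 1 := by
    rw [← Nat.card_eq_fintype_card, hcard2]
  omega

set_option maxHeartbeats 2000000 in
theorem twoStep_one_to_one_excess_one_common {ν0 β0 νT βT : Type} (d k μ : ℕ)
    (hd : 2 ≤ d) (hk : 2 ≤ k)
    (adj0 : ν0 → β0 → Prop) (groupT : νT → Fin (k + 1)) (adjT : νT → βT → Prop)
    (adjH : ν0 × Fin k → β0 × βT → Prop)
    (hH0 : IsBipartiteDegRank d (k + 1) adj0)
    (hconn : (bipGraph adj0).Connected)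
    (h2 : TwoStep (k + 1) k adj0 groupT adjT adjH)
    (Q Q' : β0) (hQQ : Q ≠ Q')
    (p1 : ν0) (hp1 : adj0 p1 Q) (hp1' : adj0 p1 Q')
    (huniq : ∀ q : ν0, adj0 q Q → adj0 q Q' → q = p1)
    (w : (bipGraph adj0).Walk (Sum.inr Q) (Sum.inr Q'))
    (hw : w.IsPath) (hwlen : w.length ≤ μ) (hwavoid : Sum.inl p1 ∉ w.support)
    (V V' : βT) :
    ∃ p : Fin (k + 1) → (bipGraph adjH).Walk (Sum.inr (Q, V)) (Sum.inr (Q', V')),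
      (∀ i, (p i).IsPath) ∧ PairwiseInternallyDisjoint p ∧
      ∃ i0 : Fin (k + 1),
        (∀ i : Fin (k + 1), i ≠ i0 → (p i).length ≤ 6) ∧ (p i0).length ≤ μ := by
  classical
  have hrank := hH0.2
  rcases w with _ | @⟨_, v, _, h0, rest0⟩
  · exact absurd rfl hQQ
  obtain ⟨q1, rfl, hq1Q⟩ := bip_adj_inr h0
  simp only [SimpleGraph.Walk.length_cons] at hwlen
  have hndw : (Sum.inr Q :: rest0.support : List (ν0 ⊕ β0)).Nodup := by
    have := hw.support_nodup
    simpa [SimpleGraph.Walk.support_cons] using this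
  have hp1rest : (Sum.inl p1 : ν0 ⊕ β0) ∉ rest0.support := by
    intro hmem
    apply hwavoid
    rw [SimpleGraph.Walk.support_cons]
    exact List.mem_cons_of_mem _ hmem
  have hQrest : (Sum.inr Q : ν0 ⊕ β0) ∉ rest0.support := (List.nodup_cons.mp hndw).1
  have hnd0 : rest0.support.Nodup := (List.nodup_cons.mp hndw).2
  obtain ⟨qm, hpen, hqmQ', hqmmem⟩ := penShape rest0.length rest0 rfl
  have hq1mem : (Sum.inl q1 : ν0 ⊕ β0) ∈ rest0.support := rest0.start_mem_support
  have hq1p1 : q1 ≠ p1 := fun h => hp1rest (h ▸ hq1mem)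
  have hqmp1 : qm ≠ p1 := fun h => hp1rest (h ▸ hqmmem)
  have hq1qm : q1 ≠ qm := fun h => hq1p1 (huniq q1 hq1Q (h ▸ hqmQ'))
  obtain ⟨jA, hjA, hjAu⟩ := h2.meetH Q V p1 hp1
  obtain ⟨jA', hjA', hjA'u⟩ := h2.meetH Q' V' p1 hp1'
  haveI : Nontrivial (Fin k) := Fin.nontrivial_iff_two_le.mpr hk
  -- selection of the lifts of the nodes of the walk
  have hspec : ∀ q : ν0, ∃ j : Fin k,
      (q = q1 → adjH (q, j) (Q, V)) ∧ (q = qm → adjH (q, j) (Q', V')) ∧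
      (q ≠ q1 → q ≠ p1 → adj0 q Q → ¬adjH (q, j) (Q, V)) ∧
      (q ≠ qm → q ≠ p1 → adj0 q Q' → ¬adjH (q, j) (Q', V')) := by
    intro q
    by_cases hq1 : q = q1
    · subst hq1
      obtain ⟨j, hj, -⟩ := h2.meetH Q V q hq1Q
      exact ⟨j, fun _ => hj, fun h => absurd h hq1qm, fun h => absurd rfl h,
        fun _ hp hadj => absurd (huniq q hq1Q hadj) hp⟩
    · by_cases hqm : q = qm
      · subst hqm
        obtain ⟨j, hj, -⟩ := h2.meetH Q' V' q hqmQ'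
        exact ⟨j, fun h => absurd h hq1, fun _ => hj,
          fun _ hp hadj => absurd (huniq q hadj hqmQ') hp, fun h => absurd rfl h⟩
      · by_cases hp : q = p1
        · exact ⟨jA, fun h => absurd h hq1, fun h => absurd h hqm,
            fun _ h => absurd hp h, fun _ h => absurd hp h⟩
        · by_cases haQ : adj0 q Q
          · obtain ⟨j0, -, hj0u⟩ := h2.meetH Q V q haQ
            obtain ⟨j, hj⟩ := exists_ne j0
            exact ⟨j, fun h => absurd h hq1, fun h => absurd h hqm,
              fun _ _ _ hadj => hj (hj0u j hadj),
              fun _ _ hadj => absurd (huniq q haQ hadj) hp⟩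
          · by_cases haQ' : adj0 q Q'
            · obtain ⟨j0, -, hj0u⟩ := h2.meetH Q' V' q haQ'
              obtain ⟨j, hj⟩ := exists_ne j0
              exact ⟨j, fun h => absurd h hq1, fun h => absurd h hqm,
                fun _ _ hadj => absurd hadj haQ,
                fun _ _ _ hadj => hj (hj0u j hadj)⟩
            · exact ⟨jA, fun h => absurd h hq1, fun h => absurd h hqm,
                fun _ _ hadj => absurd hadj haQ, fun _ _ hadj => absurd hadj haQ'⟩
  choose jsel hsel1 hsel2 hsel3 hsel4 using hspec
  -- the long path, lifted from the walk
  obtain ⟨W, hWmap, hWlen, hWnodes⟩ := liftWalk adj0 adjH Q' V' jsel qm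
    (fun u a b ha hb hne j j' => (h2.genH u a b ha hb hne j j').exists)
    (hsel2 qm rfl) rest0.length q1 rest0 rfl hnd0 hpen
  have e0 : (bipGraph adjH).Adj (Sum.inr (Q, V)) (Sum.inl (q1, jsel q1)) :=
    ((bip_adj _ _).mpr (hsel1 q1 rfl)).symm
  set longP := SimpleGraph.Walk.cons e0 W with hlongPdef
  have hlongmap : longP.support.map (Sum.map Prod.fst Prod.fst)
      = Sum.inr Q :: rest0.support := by
    rw [hlongPdef, SimpleGraph.Walk.support_cons, List.map_cons, hWmap]
    rfl
  have hlongnd : longP.support.Nodup := by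
    apply List.Nodup.of_map (Sum.map Prod.fst Prod.fst)
    rw [hlongmap]
    exact hndw
  have hlongpath : longP.IsPath := (SimpleGraph.Walk.isPath_def _).mpr hlongnd
  have hlonglen : longP.length ≤ μ := by
    have : longP.length = rest0.length + 1 := by
      rw [hlongPdef, SimpleGraph.Walk.length_cons, hWlen]
    omega
  have hlongchar : ∀ v ∈ longP.support, v ≠ Sum.inr (Q, V) → v ≠ Sum.inr (Q', V') →
      (∃ x : ν0, x ≠ p1 ∧ v = Sum.inl (x, jsel x)) ∨
      (∃ (u : β0) (c : βT), u ≠ Q ∧ u ≠ Q' ∧ v = Sum.inr (u, c)) := by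
    intro v hv hv1 hv2
    have hvW : v ∈ W.support := by
      rw [hlongPdef, SimpleGraph.Walk.support_cons, List.mem_cons] at hv
      rcases hv with rfl | hv
      · exact absurd rfl hv1
      · exact hv
    have hproj : (Sum.map Prod.fst Prod.fst) v ∈ rest0.support := by
      rw [← hWmap]
      exact List.mem_map_of_mem hvW
    obtain (⟨x, j⟩ | ⟨u, c⟩) := v
    · left
      have hx : j = jsel x := hWnodes x j hvW
      refine ⟨x, fun h => hp1rest ?_, by rw [hx]⟩
      subst h
      exact hproj
    · right
      refine ⟨u, c, ?_, ?_, rfl⟩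
      · intro hu
        rw [hu] at hproj
        exact hQrest (by simpa using hproj)
      · intro hu
        have hdst : (Sum.inr (Q', V') : (ν0 × Fin k) ⊕ (β0 × βT)) ∈ W.support :=
          SimpleGraph.Walk.end_mem_support W
        have hmapnd : (W.support.map (Sum.map Prod.fst Prod.fst)).Nodup := by
          rw [hWmap]; exact hnd0
        exact hv2 (List.inj_on_of_nodup_map hmapnd hvW hdst (by simp [hu]))
  -- the injections used to choose the groups of the internal nodes of the short paths
  obtain ⟨eL⟩ := embed_aux hk (fun q => adj0 q Q) (hrank Q) p1 q1 hp1 hq1Q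
    (Ne.symm hq1p1) jA
  obtain ⟨eR⟩ := embed_aux hk (fun q => adj0 q Q') (hrank Q') p1 qm hp1' hqmQ'
    (Ne.symm hqmp1) jA'
  set ex : Fin k → ν0 := fun j => if h : j = jA then p1 else (eL ⟨j, h⟩).1 with hexdef
  set ex' : Fin k → ν0 := fun j => if h : j = jA' then p1 else (eR ⟨j, h⟩).1 with hex'def
  have hexjA : ex jA = p1 := by rw [hexdef]; simp
  have hex'jA' : ex' jA' = p1 := by rw [hex'def]; simp
  have hexne : ∀ (j : Fin k) (h : j ≠ jA), ex j = (eL ⟨j, h⟩).1 := by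
    intro j h; rw [hexdef]; simp [h]
  have hex'ne : ∀ (j : Fin k) (h : j ≠ jA'), ex' j = (eR ⟨j, h⟩).1 := by
    intro j h; rw [hex'def]; simp [h]
  have hexQ : ∀ j, adj0 (ex j) Q := by
    intro j
    by_cases h : j = jA
    · rw [h, hexjA]; exact hp1
    · rw [hexne j h]; exact (eL ⟨j, h⟩).2.1
  have hex'Q' : ∀ j, adj0 (ex' j) Q' := by
    intro j
    by_cases h : j = jA'
    · rw [h, hex'jA']; exact hp1'
    · rw [hex'ne j h]; exact (eR ⟨j, h⟩).2.1
  have hexp1 : ∀ j, ex j = p1 → j = jA := by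
    intro j hj
    by_contra h
    rw [hexne j h] at hj
    exact (eL ⟨j, h⟩).2.2.1 hj
  have hex'p1 : ∀ j, ex' j = p1 → j = jA' := by
    intro j hj
    by_contra h
    rw [hex'ne j h] at hj
    exact (eR ⟨j, h⟩).2.2.1 hj
  have hexq1 : ∀ (j : Fin k) (h : j ≠ jA), ex j ≠ q1 := fun j h => by
    rw [hexne j h]; exact (eL ⟨j, h⟩).2.2.2
  have hex'qm : ∀ (j : Fin k) (h : j ≠ jA'), ex' j ≠ qm := fun j h => by
    rw [hex'ne j h]; exact (eR ⟨j, h⟩).2.2.2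
  have hexinj : Function.Injective ex := by
    intro a b hab
    by_cases ha : a = jA <;> by_cases hb : b = jA
    · rw [ha, hb]
    · rw [ha, hexjA] at hab; exact absurd (hexp1 b hab.symm) hb
    · rw [hb, hexjA] at hab; exact absurd (hexp1 a hab) ha
    · rw [hexne a ha, hexne b hb] at hab
      have := eL.injective (Subtype.ext hab)
      exact Subtype.mk_eq_mk.mp this
  have hex'inj : Function.Injective ex' := by
    intro a b hab
    by_cases ha : a = jA' <;> by_cases hb : b = jA'
    · rw [ha, hb]
    · rw [ha, hex'jA'] at hab; exact absurd (hex'p1 b hab.symm) hb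
    · rw [hb, hex'jA'] at hab; exact absurd (hex'p1 a hab) ha
    · rw [hex'ne a ha, hex'ne b hb] at hab
      have := eR.injective (Subtype.ext hab)
      exact Subtype.mk_eq_mk.mp this
  -- the nodes of the short paths
  have hxj0 : ∀ j, ∃ jj : Fin k, adjH (ex j, jj) (Q, V) :=
    fun j => (h2.meetH Q V (ex j) (hexQ j)).exists
  choose xj hxj using hxj0
  have hzj0 : ∀ j, ∃ jj : Fin k, adjH (ex' j, jj) (Q', V') :=
    fun j => (h2.meetH Q' V' (ex' j) (hex'Q' j)).exists
  choose zj hzj using hzj0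
  have hxjA : xj jA = jA := hjAu (xj jA) (by have := hxj jA; rwa [hexjA] at this)
  have hzjA' : zj jA' = jA' := hjA'u (zj jA') (by have := hzj jA'; rwa [hex'jA'] at this)
  -- the blocks of the short paths
  have hbL0 : ∀ j : Fin k, ∃ c : βT,
      j ≠ jA → adjH (ex j, xj j) (Q, c) ∧ adjH (p1, j) (Q, c) := by
    intro j
    by_cases h : j = jA
    · exact ⟨V, fun hc => absurd h hc⟩
    · obtain ⟨c, hc⟩ := (h2.genH Q (ex j) p1 (hexQ j) hp1
        (fun he => h (hexp1 j he)) (xj j) j).exists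
      exact ⟨c, fun _ => hc⟩
  choose bL hbL using hbL0
  have hbR0 : ∀ j : Fin k, ∃ c : βT,
      j ≠ jA' → adjH (p1, j) (Q', c) ∧ adjH (ex' j, zj j) (Q', c) := by
    intro j
    by_cases h : j = jA'
    · exact ⟨V', fun hc => absurd h hc⟩
    · obtain ⟨c, hc⟩ := (h2.genH Q' p1 (ex' j) hp1' (hex'Q' j)
        (fun he => h (hex'p1 j he.symm)) j (zj j)).exists
      exact ⟨c, fun _ => hc⟩
  choose bR hbR using hbR0
  -- distinctness facts
  have hQV' : ((Q, V) : β0 × βT) ≠ (Q', V') := fun h => hQQ (congrArg Prod.fst h)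
  have hbLV : ∀ (j : Fin k) (h : j ≠ jA), bL j ≠ V :=
    fun j h hv => h (hjAu j (hv ▸ (hbL j h).2))
  have hbRV' : ∀ (j : Fin k) (h : j ≠ jA'), bR j ≠ V' :=
    fun j h hv => h (hjA'u j (hv ▸ (hbR j h).1))
  have hbLinj : ∀ (a b : Fin k) (_ : a ≠ jA) (_ : b ≠ jA), bL a = bL b → a = b := by
    intro a b ha hb he
    obtain ⟨j0, -, hu⟩ := h2.meetH Q (bL a) p1 hp1
    rw [hu a (hbL a ha).2, hu b (by rw [he]; exact (hbL b hb).2)]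
  have hbRinj : ∀ (a b : Fin k) (_ : a ≠ jA') (_ : b ≠ jA'), bR a = bR b → a = b := by
    intro a b ha hb he
    obtain ⟨j0, -, hu⟩ := h2.meetH Q' (bR a) p1 hp1'
    rw [hu a (hbR a ha).1, hu b (by rw [he]; exact (hbR b hb).1)]
  have hexex' : ∀ a b, ex a = ex' b → a = jA ∧ b = jA' := by
    intro a b he
    by_cases ha : ex a = p1
    · exact ⟨hexp1 a ha, hex'p1 b (he.symm.trans ha)⟩
    · exact absurd (huniq (ex a) (hexQ a) (he.symm ▸ hex'Q' b)) ha
  -- the short paths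
  have hshort : ∀ j : Fin k,
      ∃ P : (bipGraph adjH).Walk (Sum.inr (Q, V)) (Sum.inr (Q', V')),
      P.IsPath ∧ P.length ≤ 6 ∧
      ∀ v ∈ P.support, v = Sum.inr (Q, V) ∨ v = Sum.inr (Q', V') ∨
        v = Sum.inl (ex j, xj j) ∨ v = Sum.inl (p1, j) ∨ v = Sum.inl (ex' j, zj j) ∨
        (j ≠ jA ∧ v = Sum.inr (Q, bL j)) ∨ (j ≠ jA' ∧ v = Sum.inr (Q', bR j)) := by
    intro j
    by_cases hA : j = jA <;> by_cases hA' : j = jA'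
    · -- length 2
      refine ⟨SimpleGraph.Walk.cons ((bip_adj (p1, j) (Q, V)).mpr (by rw [hA]; exact hjA)).symm
        (SimpleGraph.Walk.cons ((bip_adj (p1, j) (Q', V')).mpr (by rw [hA']; exact hjA'))
          SimpleGraph.Walk.nil), ?_, ?_, ?_⟩
      · rw [SimpleGraph.Walk.isPath_def]
        simp [hQV']
      · simp
      · intro v hv
        simp only [SimpleGraph.Walk.support_cons, SimpleGraph.Walk.support_nil,
          List.mem_cons, List.mem_singleton] at hv
        rcases hv with rfl | rfl | rfl | hv
        · tauto
        · tauto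
        · tauto
        · simp at hv
    · -- j = jA ≠ jA' : length 4, right detour
      have hz : ex' j ≠ p1 := fun he => hA' (hex'p1 j he)
      have hb1 := hbRV' j hA'
      refine ⟨SimpleGraph.Walk.cons ((bip_adj (p1, j) (Q, V)).mpr (by rw [hA]; exact hjA)).symm
        (SimpleGraph.Walk.cons ((bip_adj _ _).mpr (hbR j hA').1)
        (SimpleGraph.Walk.cons ((bip_adj _ _).mpr (hbR j hA').2).symm
        (SimpleGraph.Walk.cons ((bip_adj _ _).mpr (hzj j)) SimpleGraph.Walk.nil))),
        ?_, ?_, ?_⟩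
      · rw [SimpleGraph.Walk.isPath_def]
        simp [hQV', hQQ, hz, hb1, Ne.symm hz, Ne.symm hb1]
      · simp
      · intro v hv
        simp only [SimpleGraph.Walk.support_cons, SimpleGraph.Walk.support_nil,
          List.mem_cons, List.mem_singleton] at hv
        rcases hv with rfl | rfl | rfl | rfl | rfl | hv
        · tauto
        · tauto
        · exact Or.inr (Or.inr (Or.inr (Or.inr (Or.inr (Or.inr ⟨hA', rfl⟩)))))
        · tauto
        · tauto
        · simp at hv
    · -- j ≠ jA, j = jA' : length 4, left detour
      have hx : ex j ≠ p1 := fun he => hA (hexp1 j he)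
      have hb1 := hbLV j hA
      refine ⟨SimpleGraph.Walk.cons ((bip_adj _ _).mpr (hxj j)).symm
        (SimpleGraph.Walk.cons ((bip_adj _ _).mpr (hbL j hA).1)
        (SimpleGraph.Walk.cons ((bip_adj _ _).mpr (hbL j hA).2).symm
        (SimpleGraph.Walk.cons ((bip_adj (p1, j) (Q', V')).mpr (by rw [hA']; exact hjA'))
          SimpleGraph.Walk.nil))), ?_, ?_, ?_⟩
      · rw [SimpleGraph.Walk.isPath_def]
        simp [hQV', hQQ, hx, hb1, Ne.symm hx, Ne.symm hb1]
      · simp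
      · intro v hv
        simp only [SimpleGraph.Walk.support_cons, SimpleGraph.Walk.support_nil,
          List.mem_cons, List.mem_singleton] at hv
        rcases hv with rfl | rfl | rfl | rfl | rfl | hv
        · tauto
        · tauto
        · exact Or.inr (Or.inr (Or.inr (Or.inr (Or.inr (Or.inl ⟨hA, rfl⟩)))))
        · tauto
        · tauto
        · simp at hv
    · -- generic length-6 path
      have hx : ex j ≠ p1 := fun he => hA (hexp1 j he)
      have hz : ex' j ≠ p1 := fun he => hA' (hex'p1 j he)
      have hxz : ex j ≠ ex' j := fun he => hA (hexex' j j he).1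
      have hb1 := hbLV j hA
      have hb2 := hbRV' j hA'
      refine ⟨SimpleGraph.Walk.cons ((bip_adj _ _).mpr (hxj j)).symm
        (SimpleGraph.Walk.cons ((bip_adj _ _).mpr (hbL j hA).1)
        (SimpleGraph.Walk.cons ((bip_adj _ _).mpr (hbL j hA).2).symm
        (SimpleGraph.Walk.cons ((bip_adj _ _).mpr (hbR j hA').1)
        (SimpleGraph.Walk.cons ((bip_adj _ _).mpr (hbR j hA').2).symm
        (SimpleGraph.Walk.cons ((bip_adj _ _).mpr (hzj j)) SimpleGraph.Walk.nil))))),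
        ?_, ?_, ?_⟩
      · rw [SimpleGraph.Walk.isPath_def]
        simp [hQV', hQQ, hx, hz, hxz, hb1, hb2, Ne.symm hx, Ne.symm hz, Ne.symm hxz, Ne.symm hb1, Ne.symm hb2]
      · simp
      · intro v hv
        simp only [SimpleGraph.Walk.support_cons, SimpleGraph.Walk.support_nil,
          List.mem_cons, List.mem_singleton] at hv
        rcases hv with rfl | rfl | rfl | rfl | rfl | rfl | rfl | hv
        · tauto
        · tauto
        · exact Or.inr (Or.inr (Or.inr (Or.inr (Or.inr (Or.inl ⟨hA, rfl⟩)))))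
        · tauto
        · exact Or.inr (Or.inr (Or.inr (Or.inr (Or.inr (Or.inr ⟨hA', rfl⟩)))))
        · tauto
        · tauto
        · simp at hv
  choose shortP hshortpath hshortlen hshortown using hshort
  -- the key pairwise-distinctness of the internal vertices of the short paths
  have hkey : ∀ (a b : Fin k) (v : (ν0 × Fin k) ⊕ (β0 × βT)),
      (v = Sum.inl (ex a, xj a) ∨ v = Sum.inl (p1, a) ∨ v = Sum.inl (ex' a, zj a) ∨
        (a ≠ jA ∧ v = Sum.inr (Q, bL a)) ∨ (a ≠ jA' ∧ v = Sum.inr (Q', bR a))) →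
      (v = Sum.inl (ex b, xj b) ∨ v = Sum.inl (p1, b) ∨ v = Sum.inl (ex' b, zj b) ∨
        (b ≠ jA ∧ v = Sum.inr (Q, bL b)) ∨ (b ≠ jA' ∧ v = Sum.inr (Q', bR b))) →
      a = b := by
    intro a b v hva hvb
    rcases hva with rfl | rfl | rfl | ⟨ha, rfl⟩ | ⟨ha, rfl⟩
    · rcases hvb with hb | hb | hb | ⟨hb', hb⟩ | ⟨hb', hb⟩
      · obtain ⟨h1, h2⟩ : ex a = ex b ∧ xj a = xj b := by
          simpa [Prod.ext_iff] using hb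
        exact hexinj h1
      · obtain ⟨h1, h2⟩ : ex a = p1 ∧ xj a = b := by
          simpa [Prod.ext_iff] using hb
        have haA := hexp1 a h1
        rw [haA, hxjA] at h2
        exact haA.trans h2
      · obtain ⟨h1, h2⟩ : ex a = ex' b ∧ xj a = zj b := by
          simpa [Prod.ext_iff] using hb
        obtain ⟨haA, hbA'⟩ := hexex' a b h1
        rw [haA, hxjA] at h2
        rw [hbA', hzjA'] at h2
        exact haA.trans (h2.trans hbA'.symm)
      · exact absurd hb (by simp)
      · exact absurd hb (by simp)
    · rcases hvb with hb | hb | hb | ⟨hb', hb⟩ | ⟨hb', hb⟩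
      · obtain ⟨h1, h2⟩ : p1 = ex b ∧ a = xj b := by
          simpa [Prod.ext_iff] using hb
        have hbA := hexp1 b h1.symm
        rw [hbA, hxjA] at h2
        exact h2.trans hbA.symm
      · obtain ⟨-, h2⟩ : p1 = p1 ∧ a = b := by simpa [Prod.ext_iff] using hb
        exact h2
      · obtain ⟨h1, h2⟩ : p1 = ex' b ∧ a = zj b := by
          simpa [Prod.ext_iff] using hb
        have hbA' := hex'p1 b h1.symm
        rw [hbA', hzjA'] at h2
        exact h2.trans hbA'.symm
      · exact absurd hb (by simp)
      · exact absurd hb (by simp)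
    · rcases hvb with hb | hb | hb | ⟨hb', hb⟩ | ⟨hb', hb⟩
      · obtain ⟨h1, h2⟩ : ex' a = ex b ∧ zj a = xj b := by
          simpa [Prod.ext_iff] using hb
        obtain ⟨hbA, haA'⟩ := hexex' b a h1.symm
        rw [haA', hzjA'] at h2
        rw [hbA, hxjA] at h2
        exact haA'.trans (h2.trans hbA.symm)
      · obtain ⟨h1, h2⟩ : ex' a = p1 ∧ zj a = b := by
          simpa [Prod.ext_iff] using hb
        have haA' := hex'p1 a h1
        rw [haA', hzjA'] at h2
        exact haA'.trans h2
      · obtain ⟨h1, h2⟩ : ex' a = ex' b ∧ zj a = zj b := by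
          simpa [Prod.ext_iff] using hb
        exact hex'inj h1
      · exact absurd hb (by simp)
      · exact absurd hb (by simp)
    · rcases hvb with hb | hb | hb | ⟨hb', hb⟩ | ⟨hb', hb⟩
      · exact absurd hb.symm (by simp)
      · exact absurd hb.symm (by simp)
      · exact absurd hb.symm (by simp)
      · obtain ⟨-, h2⟩ : Q = Q ∧ bL a = bL b := by simpa [Prod.ext_iff] using hb
        exact hbLinj a b ha hb' h2
      · obtain ⟨h1, -⟩ : Q = Q' ∧ bL a = bR b := by simpa [Prod.ext_iff] using hb
        exact absurd h1 hQQ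
    · rcases hvb with hb | hb | hb | ⟨hb', hb⟩ | ⟨hb', hb⟩
      · exact absurd hb.symm (by simp)
      · exact absurd hb.symm (by simp)
      · exact absurd hb.symm (by simp)
      · obtain ⟨h1, -⟩ : Q' = Q ∧ bR a = bL b := by simpa [Prod.ext_iff] using hb
        exact absurd h1.symm hQQ
      · obtain ⟨-, h2⟩ : Q' = Q' ∧ bR a = bR b := by simpa [Prod.ext_iff] using hb
        exact hbRinj a b ha hb' h2
  -- assembling the family
  refine ⟨fun i => Fin.lastCases (motive := fun _ =>
      (bipGraph adjH).Walk (Sum.inr (Q, V)) (Sum.inr (Q', V'))) longP shortP i,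
    ?_, ⟨fun i j v _ h => h, ?_⟩, Fin.last k, ?_, ?_⟩
  · intro i
    rcases Fin.eq_castSucc_or_eq_last i with ⟨a, rfl⟩ | rfl
    · simp only [Fin.lastCases_castSucc]; exact hshortpath a
    · simp only [Fin.lastCases_last]; exact hlongpath
  · intro i i' v hvne hvi hvi'
    have hv1 : v ≠ Sum.inr (Q, V) := (hvne i).1
    have hv2 : v ≠ Sum.inr (Q', V') := (hvne i).2
    have hcore : ∀ (a : Fin k), v ∈ (shortP a).support →
        (v = Sum.inl (ex a, xj a) ∨ v = Sum.inl (p1, a) ∨ v = Sum.inl (ex' a, zj a) ∨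
          (a ≠ jA ∧ v = Sum.inr (Q, bL a)) ∨ (a ≠ jA' ∧ v = Sum.inr (Q', bR a))) := by
      intro a hva
      rcases hshortown a v hva with h | h | h | h | h | h | h
      · exact absurd h hv1
      · exact absurd h hv2
      · exact Or.inl h
      · exact Or.inr (Or.inl h)
      · exact Or.inr (Or.inr (Or.inl h))
      · exact Or.inr (Or.inr (Or.inr (Or.inl h)))
      · exact Or.inr (Or.inr (Or.inr (Or.inr h)))
    have hlongshort : ∀ a : Fin k, v ∈ longP.support → v ∈ (shortP a).support → False := by
      intro a hvl hvs
      rcases hlongchar v hvl hv1 hv2 with ⟨x, hxp1, rfl⟩ | ⟨u, c, huQ, huQ', rfl⟩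
      · rcases hcore a hvs with h | h | h | ⟨-, h⟩ | ⟨-, h⟩
        · obtain ⟨h1, h2⟩ : x = ex a ∧ jsel x = xj a := by simpa [Prod.ext_iff] using h
          subst h1
          by_cases haA : a = jA
          · rw [haA, hexjA] at hxp1
            exact hxp1 rfl
          · exact hsel3 (ex a) (hexq1 a haA) hxp1 (hexQ a) (by rw [h2]; exact hxj a)
        · obtain ⟨h1, -⟩ : x = p1 ∧ jsel x = a := by simpa [Prod.ext_iff] using h
          exact hxp1 h1
        · obtain ⟨h1, h2⟩ : x = ex' a ∧ jsel x = zj a := by simpa [Prod.ext_iff] using h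
          subst h1
          by_cases haA' : a = jA'
          · rw [haA', hex'jA'] at hxp1
            exact hxp1 rfl
          · exact hsel4 (ex' a) (hex'qm a haA') hxp1 (hex'Q' a) (by rw [h2]; exact hzj a)
        · exact absurd h (by simp)
        · exact absurd h (by simp)
      · rcases hcore a hvs with h | h | h | ⟨-, h⟩ | ⟨-, h⟩
        · exact absurd h (by simp)
        · exact absurd h (by simp)
        · exact absurd h (by simp)
        · obtain ⟨h1, -⟩ : u = Q ∧ c = bL a := by simpa [Prod.ext_iff] using h
          exact huQ h1
        · obtain ⟨h1, -⟩ : u = Q' ∧ c = bR a := by simpa [Prod.ext_iff] using h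
          exact huQ' h1
    rcases Fin.eq_castSucc_or_eq_last i with ⟨a, rfl⟩ | rfl <;>
      rcases Fin.eq_castSucc_or_eq_last i' with ⟨b, rfl⟩ | rfl
    · simp only [Fin.lastCases_castSucc] at hvi hvi'
      exact congrArg Fin.castSucc (hkey a b v (hcore a hvi) (hcore b hvi'))
    · simp only [Fin.lastCases_castSucc] at hvi
      simp only [Fin.lastCases_last] at hvi'
      exact (hlongshort a hvi' hvi).elim
    · simp only [Fin.lastCases_castSucc] at hvi'
      simp only [Fin.lastCases_last] at hvi
      exact (hlongshort b hvi hvi').elim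
    · rfl
  · intro i hi
    rcases Fin.eq_castSucc_or_eq_last i with ⟨a, rfl⟩ | rfl
    · simp only [Fin.lastCases_castSucc]; exact hshortlen a
    · exact absurd rfl hi
  · simp only [Fin.lastCases_last]; exact hlonglen
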